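/- There exists a constant δ > 0 (independent of r₀ and N) such that: for every N > 1, every 0 < r₀ < 1, and every sequence (a_k) in 𝔻 with ρ(a_i, a_j) ≥ r₀ for all i ≠ j and |a_k| ≥ 1 − 1/(2N) for all k, the sequence defined by b_k = (1 − N(1−|a_k|)) a_k satisfies ρ(b_i, b_j) ≥ δ r₀ / N for all i ≠ j. -/

import Mathlib

open MeasureTheory Set Complex Filter
open scoped ENNReal Real

noncomputable section

/-- The open unit disk in `ℂ`. -/
def uDisk : Set ℂ := {z : ℂ | ‖z‖ < 1}

/-- Area measure on `ℂ`, normalized so that the unit disk has measure `1`. -/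
def volA : Measure ℂ := (ENNReal.ofReal Real.pi)⁻¹ • volume

/-- Pseudo-hyperbolic distance `ρ(z,w) = |z - w| / |1 - w̄ z|`. -/
def pd (z w : ℂ) : ℝ := ‖z - w‖ / ‖1 - (starRingEnd ℂ) w * z‖

/-- Pseudo-hyperbolic disk `Δ(a,t)`. -/
def pDisk (a : ℂ) (t : ℝ) : Set ℂ := {z | z ∈ uDisk ∧ pd z a < t}

/-- The weighted Bergman measure `dA_α = (α+1)(1-|z|²)^α dA` on the unit disk. -/
def bergMeasure (α : ℝ) : Measure ℂ :=
  (volA.restrict uDisk).withDensity fun z =>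
    ENNReal.ofReal ((α + 1) * (1 - ‖z‖ ^ 2) ^ α)

/-- The joint pull-back measure `μ` induced by `φ` and `ψ`:
`μ(E) = ∫_{φ⁻¹E} ρ(z)^q dA_α + ∫_{ψ⁻¹E} ρ(z)^q dA_α` where `ρ(z) = ρ(φ z, ψ z)`. -/
def jointMu (q α : ℝ) (φ ψ : ℂ → ℂ) : Measure ℂ :=
  Measure.map φ ((bergMeasure α).withDensity fun z => ENNReal.ofReal (pd (φ z) (ψ z) ^ q))
  + Measure.map ψ ((bergMeasure α).withDensity fun z => ENNReal.ofReal (pd (φ z) (ψ z) ^ q))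

/-- The Hardy space (quasi-)norm `‖f‖_{H^p}`. -/
def hardyNorm (p : ℝ) (f : ℂ → ℂ) : ℝ≥0∞ :=
  (⨆ r : Ioo (0:ℝ) 1,
      (ENNReal.ofReal (2 * Real.pi))⁻¹ *
        ∫⁻ θ in Ioc (0:ℝ) (2 * Real.pi),
          ENNReal.ofReal
            (‖f (((r : ℝ) : ℂ) * Complex.exp ((θ : ℂ) * Complex.I))‖ ^ p)) ^ (1 / p)

/-- The weighted Bergman space (quasi-)norm `‖f‖_{A^q_α}`. -/
def bergNorm (q α : ℝ) (f : ℂ → ℂ) : ℝ≥0∞ :=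
  (∫⁻ z, ENNReal.ofReal (‖f z‖ ^ q) ∂bergMeasure α) ^ (1 / q)

/-- The difference of composition-differentiation operators, `(D_φ - D_ψ) f = f'∘φ - f'∘ψ`. -/
def diffOp (φ ψ f : ℂ → ℂ) : ℂ → ℂ := fun z => deriv f (φ z) - deriv f (ψ z)

/-- Boundedness of `D_φ - D_ψ : H^p → A^q_α`. -/
def DBounded (p q α : ℝ) (φ ψ : ℂ → ℂ) : Prop :=
  ∃ C > 0, ∀ f : ℂ → ℂ, DifferentiableOn ℂ f uDisk → hardyNorm p f < ⊤ →
    bergNorm q α (diffOp φ ψ f) ≤ ENNReal.ofReal C * hardyNorm p f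

/-- Compactness of `D_φ - D_ψ : H^p → A^q_α`. -/
def DCompact (p q α : ℝ) (φ ψ : ℂ → ℂ) : Prop :=
  ∀ f : ℕ → ℂ → ℂ, (∀ n, DifferentiableOn ℂ (f n) uDisk) →
    (∀ n, hardyNorm p (f n) ≤ 1) →
    (∀ K, K ⊆ uDisk → IsCompact K → TendstoUniformlyOn f (fun _ => (0:ℂ)) atTop K) →
    Tendsto (fun n => bergNorm q α (diffOp φ ψ (f n))) atTop (nhds 0)

/-- The Koranyi approach region `Γ(ζ)`. -/
def koranyi (ζ : ℂ) : Set ℂ :=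
  {z | z ∈ uDisk ∧ ‖1 - (starRingEnd ℂ) ζ * z‖ < 1 - ‖z‖ ^ 2}

/-- The Carleson region `Q_t(ζ)`. -/
def cBox (ζ : ℂ) (t : ℝ) : Set ℂ :=
  {z | z ∈ uDisk ∧ ‖1 - (starRingEnd ℂ) ζ * z‖ < t}

/-- The operator (quasi-)norm of `D_φ - D_ψ : H^p → A^q_α`: the least constant `C ≥ 0`
with `‖(D_φ - D_ψ) f‖_{A^q_α} ≤ C ‖f‖_{H^p}` for all `f ∈ H^p`. -/
def opNorm (p q α : ℝ) (φ ψ : ℂ → ℂ) : ℝ≥0∞ :=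
  sInf {C : ℝ≥0∞ | ∀ f : ℂ → ℂ, DifferentiableOn ℂ f uDisk → hardyNorm p f < ⊤ →
    bergNorm q α (diffOp φ ψ f) ≤ C * hardyNorm p f}


set_option maxHeartbeats 1600000

/-- Stability of separated sequences under the perturbation `b_k = (1 - N(1-|a_k|)) a_k`. -/
theorem stmt_8 :
    ∃ δ : ℝ, 0 < δ ∧
      ∀ N : ℝ, 1 < N → ∀ r₀ : ℝ, 0 < r₀ → r₀ < 1 →
        ∀ a : ℕ → ℂ, (∀ k, a k ∈ uDisk) →
          (∀ i j, i ≠ j → r₀ ≤ pd (a i) (a j)) →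
          (∀ k, 1 - 1 / (2 * N) ≤ ‖a k‖) →
          ∀ i j, i ≠ j →
            δ * r₀ / N ≤
              pd (((1 - N * (1 - ‖a i‖) : ℝ) : ℂ) * a i)
                 (((1 - N * (1 - ‖a j‖) : ℝ) : ℂ) * a j) := by
  refine ⟨1/12, by norm_num, ?_⟩
  intro N hN r₀ hr₀ hr₀1 a ha hsep hnear i j hij
  have hNpos : (0:ℝ) < N := by linarith
  set u := a i with hu
  set v := a j with hv
  have hru : ‖u‖ < 1 := ha i
  have hrv : ‖v‖ < 1 := ha j
  set r := ‖u‖ with hr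
  set t := ‖v‖ with ht
  have hrlb : 1 - 1/(2*N) ≤ r := hnear i
  have htlb : 1 - 1/(2*N) ≤ t := hnear j
  set si : ℝ := 1 - N*(1-r) with hsi
  set sj : ℝ := 1 - N*(1-t) with hsj
  set c : ℝ := (u * (starRingEnd ℂ) v).re with hc
  set A := ‖(si:ℂ)*u - (sj:ℂ)*v‖ with hA
  set Aq := ‖u - v‖ with hAq
  set D := ‖1 - (starRingEnd ℂ) ((sj:ℂ)*v) * ((si:ℂ)*u)‖ with hD
  set W := ‖1 - (starRingEnd ℂ) v * u‖ with hW
  have hsep' : r₀ ≤ Aq / W := hsep i j hij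
  show (1/12 : ℝ) * r₀ / N ≤ A / D
  clear_value r t si sj c A Aq D W
  clear hsep hnear ha
  -- basic real facts
  have h2N : 1/(2*N) < 1/2 := by
    rw [div_lt_div_iff₀ (by linarith) (by norm_num)]; linarith
  have hrhalf : (1:ℝ)/2 ≤ r := by linarith
  have hthalf : (1:ℝ)/2 ≤ t := by linarith
  have hrpos : (0:ℝ) < r := by linarith
  have htpos : (0:ℝ) < t := by linarith
  have hNr : N*(1-r) ≤ 1/2 := by
    have h1 : N*(1-r) ≤ N*(1/(2*N)) := mul_le_mul_of_nonneg_left (by linarith) hNpos.le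
    have h2 : N*(1/(2*N)) = 1/2 := by field_simp
    linarith
  have hNt : N*(1-t) ≤ 1/2 := by
    have h1 : N*(1-t) ≤ N*(1/(2*N)) := mul_le_mul_of_nonneg_left (by linarith) hNpos.le
    have h2 : N*(1/(2*N)) = 1/2 := by field_simp
    linarith
  have hsi1 : si ≤ 1 := by
    have : 0 ≤ N*(1-r) := mul_nonneg hNpos.le (by linarith)
    rw [hsi]; linarith
  have hsj1 : sj ≤ 1 := by
    have : 0 ≤ N*(1-t) := mul_nonneg hNpos.le (by linarith)
    rw [hsj]; linarith
  have hsih : (1:ℝ)/2 ≤ si := by rw [hsi]; linarith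
  have hsjh : (1:ℝ)/2 ≤ sj := by rw [hsj]; linarith
  have hcle : c ≤ r * t := by
    have h1 : c ≤ ‖u * (starRingEnd ℂ) v‖ := by
      rw [hc]; exact Complex.re_le_norm _
    have h2 : ‖u * (starRingEnd ℂ) v‖ = r * t := by
      rw [norm_mul, Complex.norm_conj, hr, ht]
    linarith
  have hnsu : Complex.normSq u = r^2 := by rw [hr]; exact (Complex.sq_norm u).symm
  have hnsv : Complex.normSq v = t^2 := by rw [ht]; exact (Complex.sq_norm v).symm
  -- numerator
  have hA2 : A^2 = si^2*r^2 + sj^2*t^2 - 2*(si*sj)*c := by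
    rw [hA, Complex.sq_norm, Complex.normSq_sub, map_mul, map_mul,
      Complex.normSq_ofReal, Complex.normSq_ofReal, hnsu, hnsv]
    have h5 : ((si:ℂ) * u * (starRingEnd ℂ) ((sj:ℂ) * v)).re = si * sj * c := by
      rw [map_mul, Complex.conj_ofReal]
      have h6 : (si:ℂ) * u * ((sj:ℂ) * (starRingEnd ℂ) v)
          = ((si*sj : ℝ):ℂ) * (u * (starRingEnd ℂ) v) := by push_cast; ring
      rw [h6, Complex.re_ofReal_mul, ← hc]
    rw [h5]; ring
  have hAq2 : Aq^2 = r^2 + t^2 - 2*c := by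
    rw [hAq, Complex.sq_norm, Complex.normSq_sub, hnsu, hnsv, ← hc]
  have hkey2 : Aq^2/16 ≤ A^2 := by
    rw [hA2, hAq2]
    have hM : si*r - sj*t = (r-t)*(1 - N + N*(r+t)) := by
      rw [hsi, hsj]; ring
    have hMge : (1:ℝ) ≤ 1 - N + N*(r+t) := by
      have hsum : (1:ℝ)/(2*N) + 1/(2*N) = 1/N := by
        field_simp
        norm_num
      have hrt2 : 2 - 1/N ≤ r + t := by linarith
      have h1 : N*(2 - 1/N) ≤ N*(r+t) := mul_le_mul_of_nonneg_left hrt2 hNpos.le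
      have h2 : N*(2 - 1/N) = 2*N - 1 := by field_simp
      linarith
    have h1 : (r-t)^2 ≤ (si*r - sj*t)^2 := by
      rw [hM]
      have hsq := sq_nonneg (r-t)
      calc (r-t)^2 = (r-t)^2 * 1 := by ring
        _ ≤ (r-t)^2 * (1 - N + N*(r+t))^2 := by
            have hx : (1:ℝ)*1 ≤ (1 - N + N*(r+t))*(1 - N + N*(r+t)) :=
              mul_le_mul hMge hMge zero_le_one (le_trans zero_le_one hMge)
            have hx2 : (1:ℝ) ≤ (1 - N + N*(r+t))^2 := by rw [sq]; linarith
            exact mul_le_mul_of_nonneg_left hx2 hsq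
        _ = ((r-t)*(1 - N + N*(r+t)))^2 := by ring
    have h2 : (1/16:ℝ)*(r*t - c) ≤ si*sj*(r*t - c) := by
      have hrt : 0 ≤ r*t - c := by linarith
      have hq : (1/2:ℝ)*(1/2) ≤ si*sj :=
        mul_le_mul hsih hsjh (by norm_num) (by linarith)
      have h16 : (1/16:ℝ) ≤ si*sj := by linarith
      exact mul_le_mul_of_nonneg_right h16 hrt
    have e1 : si^2*r^2 + sj^2*t^2 - 2*(si*sj)*c
        = (si*r - sj*t)^2 + 2*(si*sj*(r*t - c)) := by ring
    have e2 : r^2 + t^2 - 2*c = (r-t)^2 + 2*(r*t - c) := by ring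
    rw [e1, e2]
    linarith [h1, h2, sq_nonneg (r-t)]
  have hApos : 0 ≤ A := by rw [hA]; exact norm_nonneg _
  have hAqnn : 0 ≤ Aq := by rw [hAq]; exact norm_nonneg _
  have hkey : Aq/4 ≤ A := by
    have hq : (Aq/4)^2 ≤ A^2 := by
      have h3 : (Aq/4)^2 = Aq^2/16 := by ring
      linarith
    exact (pow_le_pow_iff_left₀ (by linarith) hApos two_ne_zero).mp hq
  -- denominator
  have hWlb : 1 - r*t ≤ W := by
    have h1 := norm_add_le (1 - (starRingEnd ℂ) v * u) ((starRingEnd ℂ) v * u)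
    simp only [sub_add_cancel, norm_one] at h1
    have h2 : ‖(starRingEnd ℂ) v * u‖ = t * r := by
      rw [norm_mul, Complex.norm_conj, ht, hr]
    rw [h2, ← hW] at h1
    linarith
  have hrt1 : r*t < 1 := by
    have h := mul_le_of_le_one_right hrpos.le hrv.le
    linarith
  have hWpos : 0 < W := by linarith
  have hDub : D ≤ 3*N*W := by
    have hsplit : (1:ℂ) - (starRingEnd ℂ) ((sj:ℂ)*v) * ((si:ℂ)*u)
        = (1 - (starRingEnd ℂ) v * u) + ((1 - si*sj : ℝ):ℂ) * ((starRingEnd ℂ) v * u) := by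
      rw [map_mul, Complex.conj_ofReal]; push_cast; ring
    have h1 : D ≤ W + ‖((1 - si*sj : ℝ):ℂ) * ((starRingEnd ℂ) v * u)‖ := by
      rw [hD, hsplit, hW]; exact norm_add_le _ _
    have h2 : ‖((1 - si*sj : ℝ):ℂ) * ((starRingEnd ℂ) v * u)‖
        = |1 - si*sj| * (t*r) := by
      rw [norm_mul, Complex.norm_real, Real.norm_eq_abs, norm_mul, Complex.norm_conj, ht, hr]
    have hss : 0 ≤ 1 - si*sj := by
      have h := mul_le_one₀ hsi1 (by linarith) hsj1
      linarith
    have h3 : |1 - si*sj| = 1 - si*sj := abs_of_nonneg hss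
    have h4 : 1 - si*sj ≤ (1-si) + (1-sj) := by
      have hp := mul_nonneg (by linarith : (0:ℝ) ≤ 1-si) (by linarith : (0:ℝ) ≤ 1-sj)
      have e : (1-si)*(1-sj) = 1 - si - sj + si*sj := by ring
      linarith
    have h5 : (1-si) + (1-sj) = N*(1-r) + N*(1-t) := by rw [hsi, hsj]; ring
    have h6 : N*(1-r) + N*(1-t) ≤ 2*N*(1 - r*t) := by
      have m1 : 0 ≤ r*(1-t) := mul_nonneg hrpos.le (by linarith)
      have m2 : 0 ≤ t*(1-r) := mul_nonneg htpos.le (by linarith)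
      have e : 2*(1-r*t) - ((1-r)+(1-t)) = r*(1-t) + t*(1-r) := by ring
      have hsum2 : (1-r)+(1-t) ≤ 2*(1-r*t) := by linarith
      have hm := mul_le_mul_of_nonneg_left hsum2 hNpos.le
      have e1 : N*((1-r)+(1-t)) = N*(1-r)+N*(1-t) := by ring
      have e2 : N*(2*(1-r*t)) = 2*N*(1-r*t) := by ring
      linarith
    have h7 : (1 - si*sj) * (t*r) ≤ 2*N*W := by
      have htr1 : t*r ≤ 1 := by
        have h := mul_le_of_le_one_right htpos.le hru.le
        linarith
      have hb : (1 - si*sj) * (t*r) ≤ (1 - si*sj) * 1 :=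
        mul_le_mul_of_nonneg_left htr1 hss
      have hw2 : 2*N*(1 - r*t) ≤ 2*N*W :=
        mul_le_mul_of_nonneg_left hWlb (by linarith)
      linarith
    have h8 : W + 2*N*W ≤ 3*N*W := by
      have hw : (1:ℝ)*W ≤ N*W := mul_le_mul_of_nonneg_right hN.le hWpos.le
      linarith
    calc D ≤ W + |1 - si*sj| * (t*r) := by rw [← h2]; exact h1
      _ = W + (1 - si*sj) * (t*r) := by rw [h3]
      _ ≤ W + 2*N*W := by linarith
      _ ≤ 3*N*W := h8
  have hDpos : 0 < D := by
    have h1 := norm_add_le (1 - (starRingEnd ℂ) ((sj:ℂ)*v) * ((si:ℂ)*u))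
      ((starRingEnd ℂ) ((sj:ℂ)*v) * ((si:ℂ)*u))
    simp only [sub_add_cancel, norm_one] at h1
    have h2 : ‖(starRingEnd ℂ) ((sj:ℂ)*v) * ((si:ℂ)*u)‖
        = (sj*t) * (si*r) := by
      rw [norm_mul, Complex.norm_conj, norm_mul, norm_mul, Complex.norm_real,
        Complex.norm_real, Real.norm_eq_abs, Real.norm_eq_abs, _root_.abs_of_nonneg (by linarith : (0:ℝ) ≤ sj),
        _root_.abs_of_nonneg (by linarith : (0:ℝ) ≤ si), ht, hr]
    rw [h2, ← hD] at h1
    have hs1 : sj*t ≤ t := mul_le_of_le_one_left htpos.le hsj1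
    have hs2 : si*r ≤ 1 := by
      have h := mul_le_of_le_one_left hrpos.le hsi1
      linarith
    have hlt : (sj*t) * (si*r) < 1 := by
      have hnn : 0 ≤ sj*t := mul_nonneg (by linarith) htpos.le
      have h := mul_le_of_le_one_right hnn hs2
      linarith
    linarith
  -- conclude
  have hstep : Aq/4 / (3*N*W) ≤ A / D :=
    div_le_div₀ hApos hkey hDpos hDub
  have hgoal : (1/12 : ℝ) * r₀ / N ≤ Aq/4 / (3*N*W) := by
    have hr0W : r₀ * W ≤ Aq := (le_div_iff₀ hWpos).mp hsep'
    rw [div_le_div_iff₀ hNpos (by positivity : (0:ℝ) < 3*N*W)]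
    have hm : N * (r₀ * W) ≤ N * Aq := mul_le_mul_of_nonneg_left hr0W hNpos.le
    have e1 : 1/12 * r₀ * (3*N*W) = (1/4) * (N * (r₀ * W)) := by ring
    have e2 : Aq/4 * N = (1/4) * (N * Aq) := by ring
    linarith only [hm, e1, e2]
  linarith only [hstep, hgoal]

end
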